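/- Every densely defined positive operator a : X → X* with positive lower bound γ admits a positive self-adjoint extension A_F (the Friedrichs extension) satisfying (A_F x, x) ≥ γ‖x‖² for all x ∈ dom A_F. -/

import Mathlib

open scoped ComplexConjugate ComplexOrder InnerProductSpace
noncomputable section

/-- The conjugate dual of a complex normed space: continuous conjugate-linear
functionals. Pairing `(v, x) := v x`. -/
abbrev CDual (X : Type*) [NormedAddCommGroup X] [NormedSpace ℂ X] :=
  X →SL[starRingEnd ℂ] ℂ

/-- A densely defined operator `A : X → X*` is self-adjoint (`A = A*`):
it is densely defined, symmetric (`(Ax,y) = (x,Ay)` i.e. `A ⊆ A*`), and maximal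
(any `y` for which `x ↦ (Ax,y)` is represented by some `w ∈ X*` lies in `dom A`
with `Ay = w`, i.e. `A* ⊆ A`). -/
def IsSelfAdjointOp {X : Type*} [NormedAddCommGroup X] [NormedSpace ℂ X]
    (A : X →ₗ.[ℂ] CDual X) : Prop :=
  Dense (A.domain : Set X) ∧
  (∀ x y : A.domain, A x (y : X) = starRingEnd ℂ (A y (x : X))) ∧
  (∀ (y : X) (w : CDual X),
    (∀ x : A.domain, A x y = starRingEnd ℂ (w (x : X))) →
      ∃ hy : y ∈ A.domain, A ⟨y, hy⟩ = w)

/-- `(Ax, x) ≥ 0` for all `x ∈ dom A` (using the complex order). -/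
def IsPositiveOp {X : Type*} [NormedAddCommGroup X] [NormedSpace ℂ X]
    (A : X →ₗ.[ℂ] CDual X) : Prop :=
  ∀ x : A.domain, 0 ≤ A x (x : X)


section Aux

variable {X : Type*} [NormedAddCommGroup X] [NormedSpace ℂ X]

def PreH (a : X →ₗ.[ℂ] CDual X) : Type _ := a.domain

instance (a : X →ₗ.[ℂ] CDual X) : AddCommGroup (PreH a) :=
  inferInstanceAs (AddCommGroup a.domain)

instance (a : X →ₗ.[ℂ] CDual X) : Module ℂ (PreH a) :=
  inferInstanceAs (Module ℂ a.domain)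

def PreH.toD {a : X →ₗ.[ℂ] CDual X} (z : PreH a) : a.domain := z

def PreH.ofD {a : X →ₗ.[ℂ] CDual X} (z : a.domain) : PreH a := z

lemma expand_quadratic (a : X →ₗ.[ℂ] CDual X) (x y : a.domain) (c : ℂ) :
    a (x + c • y) ((x + c • y : a.domain) : X)
      = a x (x : X) + conj c * a x (y : X) + c * a y (x : X)
        + c * conj c * a y (y : X) := by
  have hadd : a (x + c • y) = a x + c • a y := by
    rw [a.map_add, a.map_smul]
  have hco : ((x + c • y : a.domain) : X) = (x : X) + c • (y : X) := by
    simp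
  rw [hadd, hco]
  simp only [ContinuousLinearMap.add_apply, ContinuousLinearMap.smul_apply,
    map_add, map_smulₛₗ, smul_eq_mul, starRingEnd_apply]
  ring

lemma form_symm (a : X →ₗ.[ℂ] CDual X)
    (him : ∀ z : a.domain, (a z (z : X)).im = 0) (x y : a.domain) :
    a x (y : X) = conj (a y (x : X)) := by
  have h1 := him (x + (1 : ℂ) • y)
  have h2 := him (x + Complex.I • y)
  rw [expand_quadratic a x y 1] at h1
  rw [expand_quadratic a x y Complex.I] at h2
  have hx := him x
  have hy := him y
  set p := a x (x : X)
  set q := a x (y : X)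
  set r := a y (x : X)
  set s := a y (y : X)
  simp only [map_one, one_mul, mul_one, Complex.add_im] at h1
  simp only [Complex.conj_I, Complex.add_im, Complex.mul_im, Complex.I_re, Complex.I_im,
    Complex.neg_im, Complex.neg_re, Complex.mul_re] at h2
  apply Complex.ext
  · simp only [Complex.conj_re]; nlinarith [h2]
  · simp only [Complex.conj_im]; nlinarith [h1]

end Aux


/-- Friedrichs extension. Every densely defined positive operator
a : X -> X* with positive lower bound gamma ((ax,x) >= gamma * norm x ^ 2) admits a
positive self-adjoint extension A_F satisfying (A_F x, x) >= gamma * norm x ^ 2 for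
all x in dom A_F. -/
theorem statement6
    {X : Type*} [NormedAddCommGroup X] [NormedSpace ℂ X] [CompleteSpace X]
    (a : X →ₗ.[ℂ] CDual X) (hdense : Dense (a.domain : Set X))
    (γ : ℝ) (hγ : 0 < γ)
    (hlb : ∀ x : a.domain, (↑(γ * ‖(x : X)‖ ^ 2) : ℂ) ≤ a x (x : X)) :
    ∃ A : X →ₗ.[ℂ] CDual X, a ≤ A ∧ IsSelfAdjointOp A ∧ IsPositiveOp A ∧
      ∀ x : A.domain, (↑(γ * ‖(x : X)‖ ^ 2) : ℂ) ≤ A x (x : X) := by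
  classical
  have him : ∀ z : a.domain, (a z (z : X)).im = 0 := by
    intro z
    have h := (Complex.le_def.1 (hlb z)).2
    rw [Complex.ofReal_im] at h
    exact h.symm
  have hre : ∀ z : a.domain, γ * ‖(z : X)‖ ^ 2 ≤ (a z (z : X)).re := by
    intro z
    have h := (Complex.le_def.1 (hlb z)).1
    rwa [Complex.ofReal_re] at h
  have hsym := form_symm a him
  -- the inner product core on PreH a
  letI core : InnerProductSpace.Core ℂ (PreH a) :=
    { inner := fun x y => a y.toD (x.toD : X)
      conj_inner_symm := fun x y => by
        simpa using (hsym y.toD x.toD).symm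
      re_inner_nonneg := fun x => by
        have := hre x.toD
        have h0 : (0:ℝ) ≤ γ * ‖(x.toD : X)‖ ^ 2 := by positivity
        simpa using le_trans h0 this
      definite := fun x hx => by
        have h1 := hre x.toD
        have hx' : a x.toD (x.toD : X) = 0 := hx
        rw [hx'] at h1
        simp only [Complex.zero_re] at h1
        have : ‖(x.toD : X)‖ = 0 := by
          by_contra hne
          have hpos : 0 < ‖(x.toD : X)‖ ^ 2 := by positivity
          nlinarith
        have hz : (x.toD : X) = 0 := by simpa using this
        exact Subtype.ext hz
      add_left := fun x y z => by
        show a z.toD ((x.toD + y.toD : a.domain) : X)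
          = a z.toD (x.toD : X) + a z.toD (y.toD : X)
        rw [Submodule.coe_add, map_add]
      smul_left := fun x y r => by
        show a y.toD ((r • x.toD : a.domain) : X) = conj r * a y.toD (x.toD : X)
        rw [Submodule.coe_smul, map_smulₛₗ, smul_eq_mul]
      }
  letI : NormedAddCommGroup (PreH a) := core.toNormedAddCommGroup
  letI : InnerProductSpace ℂ (PreH a) := InnerProductSpace.ofCore core.toCore
  -- norm facts
  have hnorm : ∀ z : PreH a, γ * ‖(z.toD : X)‖ ^ 2 ≤ ‖z‖ ^ 2 := by
    intro z
    have h1 : (‖z‖ : ℝ) ^ 2 = Complex.re (inner ℂ z z : ℂ) :=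
      (inner_self_eq_norm_sq (𝕜 := ℂ) z).symm
    have : (inner ℂ z z : ℂ) = a z.toD (z.toD : X) := rfl
    rw [h1, this]
    exact hre z.toD
  -- the inclusion PreH a →L X
  have hbound : ∀ z : PreH a, ‖(z.toD : X)‖ ≤ (Real.sqrt γ)⁻¹ * ‖z‖ := by
    intro z
    have hs : (0:ℝ) < Real.sqrt γ := Real.sqrt_pos.2 hγ
    rw [inv_mul_eq_div, le_div_iff₀ hs]
    have h2 : (Real.sqrt γ * ‖(z.toD : X)‖) ^ 2 ≤ ‖z‖ ^ 2 := by
      rw [mul_pow, Real.sq_sqrt hγ.le]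
      exact hnorm z
    nlinarith [norm_nonneg z, mul_nonneg hs.le (norm_nonneg (z.toD : X))]
  let ιlin : PreH a →ₗ[ℂ] X :=
    { toFun := fun z => (z.toD : X)
      map_add' := fun _ _ => rfl
      map_smul' := fun _ _ => rfl }
  let ι : PreH a →L[ℂ] X := ιlin.mkContinuous _ hbound
  have hι : ∀ z : PreH a, ι z = (z.toD : X) := fun z => rfl
  -- the completion
  let H := UniformSpace.Completion (PreH a)
  let e : PreH a →L[ℂ] H := UniformSpace.Completion.toComplL
  have he : ∀ z : PreH a, e z = (z : H) := fun z => rfl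
  have hedense : DenseRange (e : PreH a → H) := by
    rw [show (e : PreH a → H) = ((↑) : PreH a → H) from rfl]
    exact UniformSpace.Completion.denseRange_coe
  have heind : IsUniformInducing (e : PreH a → H) :=
    UniformSpace.Completion.isUniformInducing_coe (PreH a)
  let J : H →L[ℂ] X := ι.extend e
  have hJe : ∀ z : PreH a, J (z : H) = (z.toD : X) := fun z =>
    ContinuousLinearMap.extend_eq (f := ι) (e := e) hedense heind z
  -- norm inequality on H
  have hJle : ∀ h : H, γ * ‖J h‖ ^ 2 ≤ ‖h‖ ^ 2 := by
    intro h
    refine UniformSpace.Completion.induction_on h ?_ ?_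
    · exact isClosed_le (by fun_prop) (by fun_prop)
    · intro z
      rw [hJe z, UniformSpace.Completion.norm_coe]
      exact hnorm z
  -- key identity
  have key1 : ∀ (x : a.domain) (h : H),
      a x (J h) = (inner ℂ h ((PreH.ofD x : PreH a) : H) : ℂ) := by
    intro x h
    refine UniformSpace.Completion.induction_on h ?_ ?_
    · refine isClosed_eq ((a x).continuous.comp J.continuous) ?_
      exact Continuous.inner continuous_id continuous_const
    · intro z
      rw [hJe z, UniformSpace.Completion.inner_coe]
      rfl
  -- J is injective
  have hJinj : ∀ h : H, J h = 0 → h = 0 := by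
    intro h hh
    have hz : ∀ k : H, (inner ℂ h k : ℂ) = 0 := by
      intro k
      refine UniformSpace.Completion.induction_on k ?_ ?_
      · exact isClosed_eq (Continuous.inner continuous_const continuous_id) continuous_const
      · intro z
        have h2 : (inner ℂ h ((PreH.ofD z.toD : PreH a) : H) : ℂ) = 0 := by
          rw [← key1 z.toD h, hh]
          simp
        exact h2
    have := hz h
    rw [← @inner_conj_symm ℂ] at this
    have h0 : (inner ℂ h h : ℂ) = 0 := by
      simpa only [Complex.conj_conj, map_zero] using congrArg (starRingEnd ℂ) this
    exact inner_self_eq_zero.1 h0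
  -- Riesz representation: every w : CDual X is represented on H
  have hsurj : ∀ w : CDual X, ∃ h : H, ∀ z : H, w (J z) = (inner ℂ z h : ℂ) := by
    intro w
    let flin : H →ₗ[ℂ] ℂ :=
      { toFun := fun z => conj (w (J z))
        map_add' := fun u v => by simp
        map_smul' := fun c u => by
          simp only [map_smul, map_smulₛₗ, smul_eq_mul, map_mul, Complex.conj_conj,
            RingHom.id_apply] }
    have fcont : Continuous fun z : H => conj (w (J z)) :=
      continuous_star.comp (w.continuous.comp J.continuous)
    let f : H →L[ℂ] ℂ := ⟨flin, fcont⟩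
    let h := (InnerProductSpace.toDual ℂ H).symm f
    refine ⟨h, fun z => ?_⟩
    have h1 : (inner ℂ h z : ℂ) = f z := InnerProductSpace.toDual_symm_apply
    have h2 : (f z : ℂ) = conj (w (J z)) := rfl
    have h3 : conj (conj (w (J z))) = w (J z) := Complex.conj_conj _
    rw [← h3, ← h2, ← h1, inner_conj_symm]
  -- separation in X via Hahn-Banach
  have hsep : ∀ v : X, (∀ w : CDual X, w v = 0) → v = 0 := by
    intro v hv
    by_contra hne
    obtain ⟨g, _, hg⟩ := exists_dual_vector ℂ v (norm_ne_zero_iff.2 hne)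
    let wlin : X →ₛₗ[starRingEnd ℂ] ℂ :=
      { toFun := fun u => conj (g u)
        map_add' := fun u u' => by simp
        map_smul' := fun c u => by simp }
    have wcont : Continuous fun u : X => conj (g u) :=
      continuous_star.comp g.continuous
    have h0 : conj (g v) = 0 := hv ⟨wlin, wcont⟩
    have hgv : g v = 0 := by
      simpa using congrArg (starRingEnd ℂ) h0
    rw [hg] at hgv
    exact hne (by simpa [norm_eq_zero] using Complex.ofReal_eq_zero.1 hgv)
  -- the graph of the Friedrichs extension
  let G : Submodule ℂ (X × CDual X) :=
    { carrier := {p | ∃ h : H, J h = p.1 ∧ ∀ z : H, p.2 (J z) = (inner ℂ z h : ℂ)}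
      add_mem' := by
        rintro p q ⟨h1, hp1, hp2⟩ ⟨h2, hq1, hq2⟩
        refine ⟨h1 + h2, by simp [map_add, hp1, hq1], fun z => ?_⟩
        simp [ContinuousLinearMap.add_apply, hp2 z, hq2 z]
        exact (inner_add_right _ _ _).symm
      zero_mem' := ⟨0, by simp, fun z => by simp; exact (inner_zero_right _).symm⟩
      smul_mem' := by
        rintro c p ⟨h, hp1, hp2⟩
        refine ⟨c • h, by simp [map_smul, hp1], fun z => ?_⟩
        simp [ContinuousLinearMap.smul_apply, hp2 z, inner_smul_right] }
  -- the graph condition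
  have hG0 : ∀ p : X × CDual X, p ∈ G → p.1 = 0 → p.2 = 0 := by
    rintro ⟨v, w⟩ ⟨h, hh1, hh2⟩ hv0
    dsimp only at hh1 hh2 hv0
    have hh0 : h = 0 := hJinj h (by rw [hh1, hv0])
    have hwz : ∀ x : a.domain, w (x : X) = 0 := by
      intro x
      have h5 := hh2 ((PreH.ofD x : PreH a) : H)
      rw [hJe (PreH.ofD x), hh0] at h5
      exact h5.trans (inner_zero_right _)
    have hcoe : (⇑w : X → ℂ) = (fun _ => 0) := by
      apply Continuous.ext_on hdense w.continuous continuous_const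
      intro v hv
      exact hwz ⟨v, hv⟩
    ext v
    exact congrFun hcoe v
  -- the Friedrichs extension
  let A : X →ₗ.[ℂ] CDual X := G.toLinearPMap
  have hAgraph : A.graph = G := Submodule.toLinearPMap_graph_eq G hG0
  have hmemG : ∀ x : A.domain, ((x : X), A x) ∈ G := by
    intro x
    rw [← hAgraph]
    exact A.mem_graph x
  -- a ≤ A
  have hle : a ≤ A := by
    apply LinearPMap.le_of_le_graph
    rw [hAgraph]
    intro p hp
    rw [LinearPMap.mem_graph_iff] at hp
    obtain ⟨x, hx1, hx2⟩ := hp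
    refine ⟨((PreH.ofD x : PreH a) : H), ?_, ?_⟩
    · rw [hJe (PreH.ofD x)]
      exact hx1
    · intro z
      rw [← hx2]
      exact key1 x z
  -- density of the domain
  have hAdense : Dense (A.domain : Set X) := by
    apply Dense.mono _ hdense
    exact fun v hv => hle.1 hv
  -- symmetry
  have hAsymm : ∀ x y : A.domain, A x (y : X) = conj (A y (x : X)) := by
    intro x y
    obtain ⟨h1, hx1, hx2⟩ := hmemG x
    obtain ⟨h2, hy1, hy2⟩ := hmemG y
    dsimp only at hx1 hx2 hy1 hy2
    rw [← hy1, hx2 h2, ← hx1, hy2 h1, ← inner_conj_symm]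
  -- lower bound
  have hAlb : ∀ x : A.domain, (↑(γ * ‖(x : X)‖ ^ 2) : ℂ) ≤ A x (x : X) := by
    intro x
    obtain ⟨h, hx1, hx2⟩ := hmemG x
    dsimp only at hx1 hx2
    have h3 : A x (x : X) = (inner ℂ h h : ℂ) := by rw [← hx1]; exact hx2 h
    have h4 : γ * ‖(x : X)‖ ^ 2 ≤ ‖h‖ ^ 2 := by rw [← hx1]; exact hJle h
    have h5 : Complex.re (inner ℂ h h : ℂ) = ‖h‖ ^ 2 := by
      have h7 := inner_self_eq_norm_sq (𝕜 := ℂ) h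
      exact h7
    have h6 : Complex.im (inner ℂ h h : ℂ) = 0 := by
      rw [← RCLike.im_to_complex]
      exact inner_self_im h
    rw [h3, Complex.le_def, Complex.ofReal_re, Complex.ofReal_im, h5, h6]
    exact ⟨h4, rfl⟩
  -- positivity
  have hApos : ∀ x : A.domain, 0 ≤ A x (x : X) := by
    intro x
    refine le_trans ?_ (hAlb x)
    rw [Complex.zero_le_real]
    positivity
  -- maximality
  have hAmax : ∀ (y : X) (w : CDual X),
      (∀ x : A.domain, A x y = conj (w (x : X))) → ∃ hy : y ∈ A.domain, A ⟨y, hy⟩ = w := by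
    intro y w hyw
    obtain ⟨h, hw⟩ := hsurj w
    have hGmem : ((J h : X), w) ∈ G := ⟨h, rfl, hw⟩
    have hy : y = J h := by
      have hz : ∀ w' : CDual X, w' (y - J h) = 0 := by
        intro w'
        obtain ⟨h', hw'⟩ := hsurj w'
        have hGmem' : ((J h' : X), w') ∈ G := ⟨h', rfl, hw'⟩
        have hdom' : J h' ∈ A.domain := by
          rw [LinearPMap.mem_domain_iff]
          exact ⟨w', by rw [hAgraph]; exact hGmem'⟩
        have hval' : A ⟨J h', hdom'⟩ = w' :=
          ((LinearPMap.image_iff hdom').2 (by rw [hAgraph]; exact hGmem')).symm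
        have e1 : w' y = conj (w (J h')) := by
          have h6 := hyw ⟨J h', hdom'⟩
          rw [hval'] at h6
          exact h6
        have e2 : w' (J h) = (inner ℂ h h' : ℂ) := hw' h
        have e3 : conj (w (J h')) = (inner ℂ h h' : ℂ) := by
          rw [hw h']
          exact inner_conj_symm _ _
        rw [map_sub, e1, e3, e2, sub_self]
      exact sub_eq_zero.1 (hsep _ hz)
    have hdom : y ∈ A.domain := by
      rw [hy, LinearPMap.mem_domain_iff]
      exact ⟨w, by rw [hAgraph]; exact hGmem⟩
    refine ⟨hdom, ?_⟩
    have hGy : ((y : X), w) ∈ G := by rw [hy]; exact hGmem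
    exact ((LinearPMap.image_iff hdom).2 (by rw [hAgraph]; exact hGy)).symm
  exact ⟨A, hle, ⟨hAdense, hAsymm, hAmax⟩, hApos, hAlb⟩
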